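/- Let E be a symmetric Dirichlet form on L²(X,m). Then for every u ∈ 𝔇 and c ≥ 0 one has E((−c)∨u∧c) ≤ E(u). If moreover E is quasilinear (dom E is a linear subspace), then for every u ∈ 𝔇 the truncations (−n)∨u∧n converge to u in the norm ‖·‖_𝔇 as n → ∞. -/

import Mathlib

open scoped ENNReal
open MeasureTheory

noncomputable section

variable {X : Type*} [TopologicalSpace X] [MeasurableSpace X] [BorelSpace X]
variable {m : Measure X} [SigmaFinite m]

/-- Convexity for an `ℝ≥0∞`-valued functional on `L²(X,m)`. -/
def IsConvexFunctional (E : Lp ℝ 2 m → ℝ≥0∞) : Prop :=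
  ∀ u v : Lp ℝ 2 m, ∀ a b : ℝ, 0 ≤ a → 0 ≤ b → a + b = 1 →
    E (a • u + b • v) ≤ ENNReal.ofReal a * E u + ENNReal.ofReal b * E v

/-- The real function `s ↦ ½((s+α)₊ − (s−α)₋)` appearing in the second defining
inequality of Dirichlet forms. -/
def medTrunc (α s : ℝ) : ℝ :=
  (max (s + α) 0 - max (-(s - α)) 0) / 2

/-- Cipriani–Grillo: a (nonlinear) Dirichlet form is a convex, lower semicontinuous
functional `E : L²(X,m) → [0,∞]` with dense effective domain satisfying the two
structural inequalities. The second one is stated for any `w ∈ L²` which is an a.e.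
representative of `½((u−v+α)₊ − (u−v−α)₋)`. -/
def IsDirichletForm (E : Lp ℝ 2 m → ℝ≥0∞) : Prop :=
  IsConvexFunctional E ∧ LowerSemicontinuous E ∧ Dense {u : Lp ℝ 2 m | E u < ⊤} ∧
  (∀ u v : Lp ℝ 2 m, E (u ⊓ v) + E (u ⊔ v) ≤ E u + E v) ∧
  (∀ u v w : Lp ℝ 2 m, ∀ α : ℝ, 0 < α →
    (∀ᵐ x ∂m, w x = medTrunc α (u x - v x)) →
    E (v + w) + E (u - w) ≤ E u + E v)

/-- `E` is symmetric: `E 0 = 0` and `E (-u) = E u`. -/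
def IsSymmetricFunctional (E : Lp ℝ 2 m → ℝ≥0∞) : Prop :=
  E 0 = 0 ∧ ∀ u : Lp ℝ 2 m, E (-u) = E u

/-- `E₁ u = ‖u‖₂² + E u`. -/
def EOne (E : Lp ℝ 2 m → ℝ≥0∞) (u : Lp ℝ 2 m) : ℝ≥0∞ :=
  ENNReal.ofReal (‖u‖ ^ 2) + E u

/-- The Luxemburg-type norm `‖u‖_𝔇 = inf {λ > 0 | E₁(u/λ) ≤ 1}`, with `inf ∅ = ∞`. -/
def Dnorm (E : Lp ℝ 2 m → ℝ≥0∞) (u : Lp ℝ 2 m) : ℝ≥0∞ :=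
  sInf (ENNReal.ofReal '' {l : ℝ | 0 < l ∧ EOne E (l⁻¹ • u) ≤ 1})

/-- The Dirichlet space `𝔇 = {u ∈ L² | ‖u‖_𝔇 < ∞}`. -/
def Dspace (E : Lp ℝ 2 m → ℝ≥0∞) : Set (Lp ℝ 2 m) :=
  {u : Lp ℝ 2 m | Dnorm E u < ⊤}

/-- `E` is quasilinear: its effective domain is a linear subspace of `L²(X,m)`. -/
def IsQuasilinear (E : Lp ℝ 2 m → ℝ≥0∞) : Prop :=
  ∃ S : Submodule ℝ (Lp ℝ 2 m), {u : Lp ℝ 2 m | E u < ⊤} = (S : Set (Lp ℝ 2 m))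

/-! Auxiliary real lemmas -/

lemma CGaux.med1 (c s : ℝ) (hc : 0 ≤ c) :
    min (max s (-c)) c + s = medTrunc (2*c) (s - -s) := by
  simp only [medTrunc, min_def, max_def]
  split_ifs <;> linarith

lemma CGaux.med2 (c s : ℝ) (hc : 0 ≤ c) :
    (s + min (max s (-c)) c) / 2 = medTrunc c (s - 0) := by
  simp only [medTrunc, min_def, max_def]
  split_ifs <;> linarith

lemma CGaux.trunc_smul (t c s : ℝ) (ht : 0 ≤ t) :
    min (max (t*s) (-(t*c))) (t*c) = t * min (max s (-c)) c := by
  rcases eq_or_lt_of_le ht with h | h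
  · simp [← h]
  · rw [min_def, max_def, min_def, max_def]
    split_ifs <;> nlinarith

lemma CGaux.abs_trunc_sub (c s : ℝ) (hc : 0 ≤ c) :
    |min (max s (-c)) c - s| ≤ |s| := by
  rw [abs_le]
  rcases abs_cases s with ⟨hs, hs'⟩ | ⟨hs, hs'⟩ <;> rw [hs] <;> constructor <;>
    simp only [min_def, max_def] <;> split_ifs <;> linarith

/-! Truncation decreases the energy -/

lemma CGaux.trunc_le (E : Lp ℝ 2 m → ℝ≥0∞) (hE : IsDirichletForm E)
    (hsym : IsSymmetricFunctional E) (u w : Lp ℝ 2 m) (c : ℝ) (hc : 0 ≤ c)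
    (hw : ∀ᵐ x ∂m, w x = min (max (u x) (-c)) c) : E w ≤ E u := by
  rcases eq_or_lt_of_le hc with rfl | hc
  · have hw0 : w = 0 := by
      refine Lp.ext ?_
      filter_upwards [hw, Lp.coeFn_zero ℝ 2 m] with x h1 h2
      rw [h1, h2, Pi.zero_apply, neg_zero, min_eq_right (le_max_right _ _)]
    rw [hw0, hsym.1]
    exact zero_le
  · have key := hE.2.2.2.2 u (-u) (w + u) (2*c) (by linarith) ?_
    · have e1 : -u + (w + u) = w := by abel
      have e2 : u - (w + u) = -w := by abel
      rw [e1, e2, hsym.2 w, hsym.2 u] at key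
      by_contra h
      push_neg at h
      exact absurd key (not_le.2 (ENNReal.add_lt_add h h))
    · filter_upwards [hw, Lp.coeFn_add w u, Lp.coeFn_neg u] with x h1 h2 h3
      rw [h2, Pi.add_apply, h1, h3, Pi.neg_apply]
      exact CGaux.med1 c (u x) hc.le

/-! The key half-sum inequality -/

lemma CGaux.half_ineq (E : Lp ℝ 2 m → ℝ≥0∞) (hE : IsDirichletForm E)
    (hsym : IsSymmetricFunctional E) (v wc : Lp ℝ 2 m) (c : ℝ) (hc : 0 < c)
    (hwc : ∀ᵐ x ∂m, wc x = min (max (v x) (-c)) c) :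
    E ((2:ℝ)⁻¹ • (v + wc)) + E ((2:ℝ)⁻¹ • (v - wc)) ≤ E v := by
  have key := hE.2.2.2.2 v 0 ((2:ℝ)⁻¹ • (v + wc)) c hc ?_
  · have e1 : (0 : Lp ℝ 2 m) + (2:ℝ)⁻¹ • (v + wc) = (2:ℝ)⁻¹ • (v + wc) := zero_add _
    have e2 : v - (2:ℝ)⁻¹ • (v + wc) = (2:ℝ)⁻¹ • (v - wc) := by module
    rw [e1, e2, hsym.1, add_zero] at key
    exact key
  · filter_upwards [hwc, Lp.coeFn_smul ((2:ℝ)⁻¹) (v + wc), Lp.coeFn_add v wc,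
      Lp.coeFn_zero ℝ 2 m] with x h1 h2 h3 h4
    rw [h2, Pi.smul_apply, h3, Pi.add_apply, h1, h4, Pi.zero_apply, smul_eq_mul,
      ← CGaux.med2 c (v x) hc.le]
    ring

/-! L² convergence of truncations -/

lemma CGaux.tendsto_norm_trunc (u : Lp ℝ 2 m) (w : ℕ → Lp ℝ 2 m)
    (hw : ∀ n : ℕ, ∀ᵐ x ∂m, w n x = min (max (u x) (-(n : ℝ))) (n : ℝ)) :
    Filter.Tendsto (fun n => ‖w n - u‖) Filter.atTop (nhds 0) := by
  have hsq : ∀ n, ‖w n - u‖ ^ 2 = ∫ x, ((w n - u) x) * ((w n - u) x) ∂m := by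
    intro n
    rw [← real_inner_self_eq_norm_sq, L2.inner_def]
    simp [RCLike.inner_apply]
    simp only [sq]
  have hbound : Integrable (fun x => u x * u x) m := by
    have hInt : Integrable (fun x => ‖u x‖ ^ ((2:ℝ≥0∞)).toReal) m :=
      (Lp.memLp u).integrable_norm_rpow (by norm_num) (by norm_num)
    refine hInt.congr (ae_of_all _ fun x => ?_)
    show ‖u x‖ ^ ((2:ℝ≥0∞)).toReal = u x * u x
    rw [show ((2:ℝ≥0∞)).toReal = ((2:ℕ):ℝ) by norm_num, Real.rpow_natCast,
      Real.norm_eq_abs, pow_two, abs_mul_abs_self]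
  have hmeas : ∀ n, AEStronglyMeasurable (fun x => ((w n - u) x) * ((w n - u) x)) m :=
    fun n => (Lp.aestronglyMeasurable (w n - u)).mul (Lp.aestronglyMeasurable (w n - u))
  have hdom : ∀ n, ∀ᵐ x ∂m, ‖((w n - u) x) * ((w n - u) x)‖ ≤ u x * u x := by
    intro n
    filter_upwards [hw n, Lp.coeFn_sub (w n) u] with x h1 h2
    rw [h2, Pi.sub_apply, h1, Real.norm_eq_abs, abs_mul]
    have h3 := CGaux.abs_trunc_sub (n : ℝ) (u x) (Nat.cast_nonneg n)
    calc |min (max (u x) (-(n:ℝ))) (n:ℝ) - u x| * |min (max (u x) (-(n:ℝ))) (n:ℝ) - u x|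
        ≤ |u x| * |u x| := mul_le_mul h3 h3 (abs_nonneg _) (abs_nonneg _)
      _ = u x * u x := abs_mul_abs_self _
  have hlim : ∀ᵐ x ∂m, Filter.Tendsto (fun n => ((w n - u) x) * ((w n - u) x)) Filter.atTop
      (nhds ((fun _ => (0:ℝ)) x)) := by
    filter_upwards [ae_all_iff.2 hw, ae_all_iff.2 (fun n => Lp.coeFn_sub (w n) u)]
      with x h1 h2
    apply tendsto_atTop_of_eventually_const (i₀ := ⌈|u x|⌉₊)
    intro n hn
    have hxn : |u x| ≤ (n : ℝ) := le_trans (Nat.le_ceil _) (Nat.cast_le.2 hn)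
    rw [abs_le] at hxn
    rw [h2 n, Pi.sub_apply, h1 n, max_eq_left (by linarith [hxn.1]),
      min_eq_left hxn.2, sub_self, mul_zero]
  have hDCT := tendsto_integral_of_dominated_convergence (μ := m)
    (F := fun n x => ((w n - u) x) * ((w n - u) x)) (f := fun _ => (0:ℝ))
    (fun x => u x * u x) hmeas hbound hdom hlim
  rw [integral_zero] at hDCT
  have hsq' : Filter.Tendsto (fun n => ‖w n - u‖ ^ 2) Filter.atTop (nhds 0) := by
    simpa only [hsq] using hDCT
  have := (Real.continuous_sqrt.tendsto 0).comp hsq'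
  simpa [Function.comp_def, Real.sqrt_sq (norm_nonneg _)] using this

/-! Quasilinearity: scalar multiples stay in the domain -/

lemma CGaux.smul_mem_dom (E : Lp ℝ 2 m → ℝ≥0∞) (hq : IsQuasilinear E) (u : Lp ℝ 2 m)
    (hu : u ∈ Dspace E) (t : ℝ) : E (t • u) < ⊤ := by
  obtain ⟨S, hS⟩ := hq
  have hne : {l : ℝ | 0 < l ∧ EOne E (l⁻¹ • u) ≤ 1}.Nonempty := by
    by_contra h
    rw [Set.not_nonempty_iff_eq_empty] at h
    simp [Dspace, Dnorm, h] at hu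
  obtain ⟨l, hl, h1⟩ := hne
  have h2 : E (l⁻¹ • u) < ⊤ :=
    lt_of_le_of_lt (le_trans (self_le_add_left _ _) h1) (by norm_num)
  have hmem : l⁻¹ • u ∈ S := by
    have : l⁻¹ • u ∈ {v : Lp ℝ 2 m | E v < ⊤} := h2
    rwa [hS] at this
  have hmem2 : (t * l) • (l⁻¹ • u) ∈ S := S.smul_mem _ hmem
  rw [smul_smul, mul_assoc, mul_inv_cancel₀ (ne_of_gt hl), mul_one] at hmem2
  have : t • u ∈ {v : Lp ℝ 2 m | E v < ⊤} := by rw [hS]; exact hmem2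
  exact this

/-- For a symmetric Dirichlet form, `E((−c) ∨ u ∧ c) ≤ E(u)` for `u ∈ 𝔇` and `c ≥ 0`
(here `w` is any a.e. representative of the truncation `min (max u (−c)) c`); if `E` is
moreover quasilinear, the truncations `(−n) ∨ u ∧ n` converge to `u` in `‖·‖_𝔇`. -/
theorem truncation_le_and_tendsto
    (hsupp : ∀ U : Set X, IsOpen U → U.Nonempty → 0 < m U)
    (E : Lp ℝ 2 m → ℝ≥0∞) (hE : IsDirichletForm E) (hsym : IsSymmetricFunctional E) :
    (∀ u ∈ Dspace E, ∀ c : ℝ, 0 ≤ c → ∀ w : Lp ℝ 2 m,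
      (∀ᵐ x ∂m, w x = min (max (u x) (-c)) c) → E w ≤ E u) ∧
    (IsQuasilinear E →
      ∀ u ∈ Dspace E, ∀ w : ℕ → Lp ℝ 2 m,
        (∀ n : ℕ, ∀ᵐ x ∂m, w n x = min (max (u x) (-(n : ℝ))) (n : ℝ)) →
        Filter.Tendsto (fun n => Dnorm E (w n - u)) Filter.atTop (nhds 0)) := by
  constructor
  · intro u _ c hc w hw
    exact CGaux.trunc_le E hE hsym u w c hc hw
  · intro hq u hu w hw
    rw [ENNReal.tendsto_nhds_zero]
    intro ε hε
    -- choose the scale `l`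
    set r : ℝ≥0∞ := min 1 ε with hr
    have hr0 : 0 < r := lt_min zero_lt_one hε
    have hrtop : r ≠ ⊤ := ne_top_of_le_ne_top ENNReal.one_ne_top (min_le_left _ _)
    set l : ℝ := r.toReal with hldef
    have hl0 : 0 < l := ENNReal.toReal_pos (ne_of_gt hr0) hrtop
    have hofl : ENNReal.ofReal l = r := ENNReal.ofReal_toReal hrtop
    -- L² convergence of the truncations
    have hnorm := CGaux.tendsto_norm_trunc u w hw
    have hconv : Filter.Tendsto w Filter.atTop (nhds u) :=
      tendsto_iff_norm_sub_tendsto_zero.2 hnorm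
    set t : ℝ := 2 * l⁻¹ with htdef
    have ht0 : 0 < t := by positivity
    have hEtu : E (t • u) < ⊤ := CGaux.smul_mem_dom E hq u hu t
    -- the key inequality
    have hkey : ∀ n : ℕ, 1 ≤ n →
        E ((2:ℝ)⁻¹ • (t • u + t • w n)) + E ((2:ℝ)⁻¹ • (t • u - t • w n)) ≤ E (t • u) := by
      intro n hn
      apply CGaux.half_ineq E hE hsym (t • u) (t • w n) (t * n)
        (by positivity)
      filter_upwards [hw n, Lp.coeFn_smul t (w n), Lp.coeFn_smul t u] with x h1 h2 h3
      rw [h2, Pi.smul_apply, h1, h3, Pi.smul_apply, smul_eq_mul, smul_eq_mul]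
      exact (CGaux.trunc_smul t n (u x) ht0.le).symm
    -- lower semicontinuity step
    have hz : Filter.Tendsto (fun n => (2:ℝ)⁻¹ • (t • u + t • w n)) Filter.atTop
        (nhds ((2:ℝ)⁻¹ • (t • u + t • u))) :=
      ((tendsto_const_nhds.add (hconv.const_smul t)).const_smul _)
    have hzz : (2:ℝ)⁻¹ • (t • u + t • u) = t • u := by module
    rw [hzz] at hz
    set δ : ℝ≥0∞ := ENNReal.ofReal (1/2) with hδdef
    have hδ0 : 0 < δ := ENNReal.ofReal_pos.2 (by norm_num)
    have hEsmall : ∀ᶠ n in Filter.atTop, E ((2:ℝ)⁻¹ • (t • u - t • w n)) ≤ δ := by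
      rcases le_or_gt (E (t • u)) δ with hcase | hcase
      · filter_upwards [Filter.eventually_ge_atTop 1] with n hn
        exact le_trans (le_trans (self_le_add_left _ _) (hkey n hn)) hcase
      · have hy : E (t • u) - δ < E (t • u) :=
          ENNReal.sub_lt_self hEtu.ne (hδ0.trans hcase).ne' hδ0.ne'
        have hev := hz.eventually (hE.2.1 (t • u) _ hy)
        filter_upwards [hev, Filter.eventually_ge_atTop 1] with n h1 hn
        by_contra hcon
        push_neg at hcon
        have hlt : E (t • u) < E ((2:ℝ)⁻¹ • (t • u + t • w n))
            + E ((2:ℝ)⁻¹ • (t • u - t • w n)) := by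
          calc E (t • u) = (E (t • u) - δ) + δ := (tsub_add_cancel_of_le hcase.le).symm
            _ < _ := ENNReal.add_lt_add h1 hcon
        exact absurd (hkey n hn) (not_le.2 hlt)
    have hnsmall : ∀ᶠ n in Filter.atTop,
        ENNReal.ofReal (‖l⁻¹ • (w n - u)‖ ^ 2) ≤ δ := by
      have h2 : Filter.Tendsto (fun n => ‖l⁻¹ • (w n - u)‖) Filter.atTop (nhds 0) := by
        have := hnorm.const_mul ‖l⁻¹‖
        simp only [mul_zero] at this
        refine this.congr fun n => ?_
        rw [norm_smul]
      have h3 : Filter.Tendsto (fun n => ‖l⁻¹ • (w n - u)‖ ^ 2) Filter.atTop (nhds 0) := by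
        have := h2.pow 2
        simpa using this
      filter_upwards [h3.eventually_lt_const (show (0:ℝ) < 1/2 by norm_num)] with n hn
      exact ENNReal.ofReal_le_ofReal hn.le
    filter_upwards [hEsmall, hnsmall] with n h1 h2
    have heq : l⁻¹ • (w n - u) = -((2:ℝ)⁻¹ • (t • u - t • w n)) := by
      rw [htdef]
      have hl : l ≠ 0 := ne_of_gt hl0
      module
    have hEeq : E (l⁻¹ • (w n - u)) = E ((2:ℝ)⁻¹ • (t • u - t • w n)) := by
      rw [heq, hsym.2]
    have hmem : l ∈ {l' : ℝ | 0 < l' ∧ EOne E (l'⁻¹ • (w n - u)) ≤ 1} := by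
      refine ⟨hl0, ?_⟩
      rw [EOne, hEeq]
      calc ENNReal.ofReal (‖l⁻¹ • (w n - u)‖ ^ 2) + E ((2:ℝ)⁻¹ • (t • u - t • w n))
          ≤ δ + δ := add_le_add h2 h1
        _ = 1 := by
            rw [hδdef, ← ENNReal.ofReal_add (by norm_num) (by norm_num)]
            norm_num
    have hDle : Dnorm E (w n - u) ≤ ENNReal.ofReal l := sInf_le ⟨l, hmem, rfl⟩
    exact le_trans hDle (le_trans (le_of_eq hofl) (min_le_right _ _))

end
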